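/- Every subtree of a top tree T for a tree t evaluates to (an isomorphic copy of) a subcluster of t. -/

import Mathlib

/-- Clusters: ordered labelled rooted trees in which distinguished leaves may be
marked as bottom boundary nodes ("holes"); rank = number of holes. -/
inductive CTree (L : Type) where
  | hole : L → CTree L
  | node : L → List (CTree L) → CTree L

/-- The rank of a cluster: its number of boundary holes. -/
def CTree.rank {L : Type} : CTree L → ℕ
  | .hole _ => 1
  | .node _ cs => (cs.attach.map (fun c => CTree.rank c.1)).sum
decreasing_by
  have := List.sizeOf_lt_of_mem c.2
  simp only [CTree.node.sizeOf_spec]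
  omega

/-- The label of the root. -/
def CTree.rootLabel {L : Type} : CTree L → L
  | .hole l => l
  | .node l _ => l

/-- The labels of the boundary holes, in left-to-right order. -/
def CTree.holeLabels {L : Type} : CTree L → List L
  | .hole l => [l]
  | .node _ cs => (cs.attach.map (fun c => CTree.holeLabels c.1)).foldr (· ++ ·) []
decreasing_by
  have := List.sizeOf_lt_of_mem c.2
  simp only [CTree.node.sizeOf_spec]
  omega

/-- Vertical merge: substitute `t` for the bottom boundary hole of `s`. -/
def CTree.vmerge {L : Type} (s t : CTree L) : CTree L :=
  match s with
  | .hole _ => t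
  | .node l cs => .node l (cs.attach.map (fun c => CTree.vmerge c.1 t))
decreasing_by
  have := List.sizeOf_lt_of_mem c.2
  simp only [CTree.node.sizeOf_spec]
  omega

/-- Top trees: binary trees whose leaves are atomic clusters `(a, b, i)` (an edge
from an `a`-labelled node to a `b`-labelled node, with rank bit `i`) and whose
internal nodes are labelled with the vertical or horizontal merge operation. -/
inductive TopTree (L : Type) where
  | leaf : L → L → Bool → TopTree L
  | vmerge : TopTree L → TopTree L → TopTree L
  | hmerge : TopTree L → TopTree L → TopTree L

/-- Partial evaluation of a top tree to a cluster. -/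
def TopTree.eval {L : Type} [DecidableEq L] : TopTree L → Option (CTree L)
  | .leaf a b i => some (.node a [if i then CTree.hole b else CTree.node b []])
  | .vmerge T₁ T₂ =>
    match T₁.eval, T₂.eval with
    | some c₁, some c₂ =>
      if c₁.rank = 1 ∧ c₁.holeLabels = [c₂.rootLabel] then some (c₁.vmerge c₂) else none
    | _, _ => none
  | .hmerge T₁ T₂ =>
    match T₁.eval, T₂.eval with
    | some (.node a cs), some (.node b ds) =>
      if a = b ∧ (CTree.node a cs).rank + (CTree.node b ds).rank ≤ 1 then
        some (.node a (cs ++ ds))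
      else none
    | _, _ => none

/-- `CSub s t`: `s` is a (full) subtree of `t`, i.e. `s = t(v)` for a node `v`. -/
inductive CSub {L : Type} : CTree L → CTree L → Prop
  | refl (t : CTree L) : CSub t t
  | child {s c : CTree L} {l : L} {cs : List (CTree L)} :
      c ∈ cs → CSub s c → CSub s (.node l cs)

/-- `Punch c c'`: `c'` is obtained from `c` by replacing the subtree rooted at
one node `u` of `c` by a hole labelled with the label of `u`. -/
inductive Punch {L : Type} : CTree L → CTree L → Prop
  | top (c : CTree L) : Punch c (.hole c.rootLabel)
  | inside {c c' : CTree L} (l : L) (pre post : List (CTree L)) :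
      Punch c c' → Punch (.node l (pre ++ c :: post)) (.node l (pre ++ c' :: post))

/-- `StrictPunch c c'`: `c'` is obtained from `c` by punching a hole strictly
below the root of `c`. -/
def StrictPunch {L : Type} (c c' : CTree L) : Prop :=
  ∃ (l : L) (pre post : List (CTree L)) (d d' : CTree L),
    c = .node l (pre ++ d :: post) ∧ c' = .node l (pre ++ d' :: post) ∧ Punch d d'

/-- `IsSubcluster c t`: `c` is (an isomorphic copy of) a subcluster of `t`:
there is a node `v` of `t` with children `u_1, …, u_d` and indices `i ≤ j` such
that `c` is induced by `v` together with the subtrees `t(u_i), …, t(u_j)`,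
possibly with the subtree rooted at one node `u` strictly below `v` replaced by
a bottom boundary hole. -/
def IsSubcluster {L : Type} (c t : CTree L) : Prop :=
  ∃ (l : L) (cs : List (CTree L)) (i j : ℕ),
    CSub (.node l cs) t ∧ ((cs.drop i).take j) ≠ [] ∧
    (c = .node l ((cs.drop i).take j) ∨ StrictPunch (.node l ((cs.drop i).take j)) c)

namespace CTree
variable {L : Type}

theorem myInd {P : CTree L → Prop} (hh : ∀ l, P (hole l))
    (hn : ∀ l cs, (∀ c ∈ cs, P c) → P (node l cs)) : ∀ c, P c
  | hole l => hh l
  | node l cs => hn l cs (fun c hc => myInd hh hn c)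
termination_by c => sizeOf c
decreasing_by
  have := List.sizeOf_lt_of_mem hc
  simp only [CTree.node.sizeOf_spec]
  omega

@[simp] theorem rank_hole (l : L) : (hole l).rank = 1 := by rw [rank]

@[simp] theorem rank_node (l : L) (cs : List (CTree L)) :
    (node l cs).rank = (cs.map rank).sum := by
  rw [rank, List.attach_map_val]

theorem foldr_app (Ls : List (List L)) : Ls.foldr (· ++ ·) [] = Ls.flatten := by
  induction Ls with
  | nil => rfl
  | cons l ls ih => simp [ih]

@[simp] theorem holeLabels_hole (l : L) : (hole l).holeLabels = [l] := by rw [holeLabels]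

@[simp] theorem holeLabels_node (l : L) (cs : List (CTree L)) :
    (node l cs).holeLabels = (cs.map holeLabels).flatten := by
  rw [holeLabels, List.attach_map_val, foldr_app]

@[simp] theorem vmerge_hole (l : L) (b : CTree L) : (hole l).vmerge b = b := by rw [vmerge]

@[simp] theorem vmerge_node (l : L) (cs : List (CTree L)) (b : CTree L) :
    (node l cs).vmerge b = node l (cs.map (vmerge · b)) := by
  rw [vmerge]
  exact congrArg _ (List.attach_map_val (l := cs) (f := (vmerge · b)))

theorem rank_eq_length_holeLabels : ∀ c : CTree L, c.rank = c.holeLabels.length := by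
  refine myInd (fun l => by simp) (fun l cs ih => ?_)
  simp only [rank_node, holeLabels_node, List.length_flatten, List.map_map]
  exact congrArg List.sum (List.map_congr_left (fun c hc => ih c hc))


theorem rank_zero_vmerge (b : CTree L) :
    ∀ c : CTree L, c.rank = 0 → c.vmerge b = c := by
  refine myInd (fun l h => by simp at h) (fun l cs ih h => ?_)
  simp only [rank_node, List.sum_eq_zero_iff, List.mem_map] at h
  rw [vmerge_node]
  congr 1
  have : List.map (vmerge · b) cs = List.map id cs :=
    List.map_congr_left (fun c hc => ih c hc (h _ ⟨c, hc, rfl⟩))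
  rw [this, List.map_id]

theorem rank_vmerge (b : CTree L) :
    ∀ c : CTree L, (c.vmerge b).rank = c.rank * b.rank := by
  refine myInd (fun l => by simp) (fun l cs ih => ?_)
  simp only [vmerge_node, rank_node, List.map_map]
  rw [← List.sum_map_mul_right]
  exact congrArg List.sum (List.map_congr_left (fun c hc => ih c hc))

theorem rank_zero_holeLabels {c : CTree L} (h : c.rank = 0) : c.holeLabels = [] := by
  rw [rank_eq_length_holeLabels] at h
  exact List.eq_nil_of_length_eq_zero h

end CTree

namespace CTree

theorem csub_trans {s t u : CTree L} (h1 : CSub s t) (h2 : CSub t u) : CSub s u := by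
  induction h2 with
  | refl => exact h1
  | child hc _ ih => exact CSub.child hc ih

theorem csub_holeLabels_sublist {s t : CTree L} (h : CSub s t) :
    s.holeLabels.Sublist t.holeLabels := by
  induction h with
  | refl => exact List.Sublist.refl _
  | child hc _ ih =>
    refine ih.trans ?_
    rw [holeLabels_node]
    exact List.sublist_flatten_of_mem (List.mem_map_of_mem (f := holeLabels) hc)

theorem csub_vmerge {s t : CTree L} (b : CTree L) (h : CSub s t) :
    CSub (s.vmerge b) (t.vmerge b) := by
  induction h with
  | refl => exact CSub.refl _
  | @child c l cs hc _ ih =>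
    rw [vmerge_node]
    exact CSub.child (List.mem_map_of_mem (f := (vmerge · b)) hc) ih

theorem csub_vmerge_right (b : CTree L) :
    ∀ s : CTree L, 1 ≤ s.rank → CSub b (s.vmerge b) := by
  refine myInd (fun l _ => by simpa using CSub.refl b) (fun l cs ih h => ?_)
  simp only [rank_node] at h
  have : ∃ c ∈ cs, 1 ≤ c.rank := by
    by_contra hcon
    push_neg at hcon
    have : (cs.map rank).sum = 0 := by
      rw [List.sum_eq_zero_iff]
      intro x hx
      obtain ⟨c, hc, rfl⟩ := List.mem_map.mp hx
      have := hcon c hc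
      omega
    omega
  obtain ⟨c, hc, hc1⟩ := this
  rw [vmerge_node]
  exact CSub.child (List.mem_map_of_mem (f := (vmerge · b)) hc) (ih c hc hc1)

theorem punch_rank_pos {c c' : CTree L} (h : Punch c c') : 1 ≤ c'.rank := by
  induction h with
  | top => simp
  | inside l pre post _ ih =>
    simp only [rank_node, List.map_append, List.sum_append, List.map_cons, List.sum_cons]
    omega

theorem sum_one_split (cs : List (CTree L)) (h : (cs.map rank).sum = 1) :
    ∃ pre d post, cs = pre ++ d :: post ∧ d.rank = 1 ∧
      (∀ x ∈ pre, rank x = 0) ∧ (∀ x ∈ post, rank x = 0) := by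
  induction cs with
  | nil => simp at h
  | cons c cs ih =>
    simp only [List.map_cons, List.sum_cons] at h
    rcases Nat.eq_zero_or_pos c.rank with h0 | h1
    · obtain ⟨pre, d, post, rfl, hd, hpre, hpost⟩ := ih (by omega)
      refine ⟨c :: pre, d, post, rfl, hd, ?_, hpost⟩
      intro x hx
      rcases List.mem_cons.mp hx with rfl | hx
      exacts [h0, hpre x hx]
    · have hc : c.rank = 1 := by omega
      have hz : (cs.map rank).sum = 0 := by omega
      rw [List.sum_eq_zero_iff] at hz
      exact ⟨[], c, cs, rfl, hc, by simp, fun x hx => hz _ (List.mem_map_of_mem (f := rank) hx)⟩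

theorem flatten_split (pre post : List (CTree L)) (d : CTree L)
    (hpre : ∀ x ∈ pre, rank x = 0) (hpost : ∀ x ∈ post, rank x = 0) :
    ((pre ++ d :: post).map holeLabels).flatten = d.holeLabels := by
  have h1 : (pre.map holeLabels).flatten = [] := by
    rw [List.flatten_eq_nil_iff]
    intro l hl
    obtain ⟨x, hx, rfl⟩ := List.mem_map.mp hl
    exact rank_zero_holeLabels (hpre x hx)
  have h2 : (post.map holeLabels).flatten = [] := by
    rw [List.flatten_eq_nil_iff]
    intro l hl
    obtain ⟨x, hx, rfl⟩ := List.mem_map.mp hl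
    exact rank_zero_holeLabels (hpost x hx)
  simp [List.map_append, List.flatten_append, h1, h2]

theorem map_vmerge_split (b : CTree L) (pre post : List (CTree L)) (d : CTree L)
    (hpre : ∀ x ∈ pre, rank x = 0) (hpost : ∀ x ∈ post, rank x = 0) :
    (pre ++ d :: post).map (vmerge · b) = pre ++ d.vmerge b :: post := by
  simp only [List.map_append, List.map_cons]
  rw [show pre.map (vmerge · b) = pre from ?_, show post.map (vmerge · b) = post from ?_]
  · conv_rhs => rw [← List.map_id post]
    exact List.map_congr_left (fun x hx => rank_zero_vmerge b x (hpost x hx))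
  · conv_rhs => rw [← List.map_id pre]
    exact List.map_congr_left (fun x hx => rank_zero_vmerge b x (hpre x hx))


theorem map_vmerge_id (b : CTree L) {xs : List (CTree L)} (h : ∀ x ∈ xs, rank x = 0) :
    xs.map (vmerge · b) = xs := by
  conv_rhs => rw [← List.map_id xs]
  exact List.map_congr_left (fun x hx => rank_zero_vmerge b x (h x hx))

theorem punch_vmerge_self (b : CTree L) :
    ∀ d : CTree L, d.holeLabels = [b.rootLabel] → Punch (d.vmerge b) d := by
  refine myInd (fun l h => ?_) (fun l cs ih h => ?_)
  · simp only [holeLabels_hole, List.cons.injEq, and_true] at h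
    subst h
    rw [vmerge_hole]
    exact Punch.top b
  · have hr : (cs.map rank).sum = 1 := by
      have := rank_eq_length_holeLabels (node l cs)
      rw [rank_node, h] at this
      simpa using this
    obtain ⟨pre, d, post, rfl, hd, hpre, hpost⟩ := sum_one_split cs hr
    have hdl : d.holeLabels = [b.rootLabel] := by
      rw [holeLabels_node, flatten_split pre post d hpre hpost] at h
      exact h
    rw [vmerge_node, map_vmerge_split b pre post d hpre hpost]
    exact Punch.inside l pre post (ih d (by simp) hdl)

theorem punch_vmerge (b : CTree L) {e e' : CTree L}
    (h : Punch e e') (he : e.holeLabels = [b.rootLabel]) (he' : e'.rank = 1) :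
    Punch (e.vmerge b) e' := by
  induction h with
  | top c =>
    cases c with
    | hole l =>
      simp only [holeLabels_hole, List.cons.injEq, and_true] at he
      rw [vmerge_hole]
      have : (CTree.hole l).rootLabel = b.rootLabel := he ▸ rfl
      rw [show CTree.rootLabel (CTree.hole l) = l from rfl] at this
      have hb := Punch.top b
      rw [← this] at hb
      exact hb
    | node l cs =>
      rw [vmerge_node]
      exact Punch.top _
  | inside l pre post hp ih =>
    rename_i d d'
    have hpos := punch_rank_pos hp
    rw [rank_node, List.map_append, List.sum_append, List.map_cons, List.sum_cons] at he'
    have hpre : ∀ x ∈ pre, rank x = 0 := by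
      intro x hx
      have hz : (pre.map rank).sum = 0 := by omega
      rw [List.sum_eq_zero_iff] at hz
      exact hz _ (List.mem_map_of_mem (f := rank) hx)
    have hpost : ∀ x ∈ post, rank x = 0 := by
      intro x hx
      have hz : (post.map rank).sum = 0 := by omega
      rw [List.sum_eq_zero_iff] at hz
      exact hz _ (List.mem_map_of_mem (f := rank) hx)
    have hd' : d'.rank = 1 := by omega
    have hdl : d.holeLabels = [b.rootLabel] := by
      rw [holeLabels_node, flatten_split pre post d hpre hpost] at he
      exact he
    rw [vmerge_node, map_vmerge_split b pre post d hpre hpost]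
    exact Punch.inside l pre post (ih hdl hd')

theorem subcluster_csub {c s t : CTree L} (h : IsSubcluster c s) (hst : CSub s t) :
    IsSubcluster c t := by
  obtain ⟨l, cs, i, j, hsub, hne, hor⟩ := h
  exact ⟨l, cs, i, j, csub_trans hsub hst, hne, hor⟩

theorem subcluster_self {l : L} {cs : List (CTree L)} (hne : cs ≠ []) :
    IsSubcluster (node l cs) (node l cs) :=
  ⟨l, cs, 0, cs.length, CSub.refl _, by simpa using hne, Or.inl (by simp)⟩

theorem subcluster_append_left {c : CTree L} {a : L} {cs ds : List (CTree L)}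
    (h : IsSubcluster c (node a cs)) : IsSubcluster c (node a (cs ++ ds)) := by
  obtain ⟨l, cs, i, j, hsub, hne, hor⟩ := h
  cases hsub with
  | refl =>
    have hlen : i ≤ cs.length := by
      by_contra hcon
      push_neg at hcon
      apply hne
      rw [List.drop_eq_nil_iff.mpr (by omega)]
      simp
    have hjle : ((cs.drop i).take j).length ≤ j := by
      simp [List.length_take]
    have hjlen : ((cs.drop i).take j).length ≤ (cs.drop i).length := by
      simp [List.length_take]
    have hseg : ((cs ++ ds).drop i).take ((cs.drop i).take j).length = (cs.drop i).take j := by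
      rw [List.drop_append_of_le_length hlen, List.take_append_of_le_length hjlen,
        show (cs.drop i).take ((cs.drop i).take j).length
            = ((cs.drop i).take j).take ((cs.drop i).take j).length by
          rw [List.take_take, min_eq_left hjle],
        List.take_length]
    exact ⟨a, cs ++ ds, i, ((cs.drop i).take j).length, CSub.refl _, by rw [hseg]; exact hne,
      by rw [hseg]; exact hor⟩
  | child hc hsub' =>
    exact ⟨l, cs, i, j, CSub.child (List.mem_append_left ds hc) hsub', hne, hor⟩

theorem subcluster_append_right {c : CTree L} {a : L} {cs ds : List (CTree L)}
    (h : IsSubcluster c (node a ds)) : IsSubcluster c (node a (cs ++ ds)) := by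
  obtain ⟨l, cs', i, j, hsub, hne, hor⟩ := h
  cases hsub with
  | refl =>
    have hseg : ((cs ++ ds).drop (cs.length + i)).take j = (ds.drop i).take j := by
      rw [List.drop_length_add_append]
    exact ⟨a, cs ++ ds, cs.length + i, j, CSub.refl _, by rw [hseg]; exact hne,
      by rw [hseg]; exact hor⟩
  | child hc hsub' =>
    exact ⟨l, cs', i, j, CSub.child (List.mem_append_right cs hc) hsub', hne, hor⟩

theorem subcluster_vmerge_left {c s b : CTree L}
    (hc : c.rank ≤ 1) (h : IsSubcluster c s) (hs : s.holeLabels = [b.rootLabel]) :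
    IsSubcluster c (s.vmerge b) := by
  obtain ⟨l, cs, i, j, hsub, hne, hor⟩ := h
  have hsub' : CSub (node l (cs.map (vmerge · b))) (s.vmerge b) := by
    have := csub_vmerge b hsub
    rwa [vmerge_node] at this
  have hseg : ((cs.map (vmerge · b)).drop i).take j = ((cs.drop i).take j).map (vmerge · b) := by
    rw [← List.map_drop, ← List.map_take]
  have hmem : ∀ d ∈ (cs.drop i).take j, d.holeLabels.Sublist [b.rootLabel] := by
    intro d hd
    have hds : CSub d s :=
      csub_trans (CSub.child (List.mem_of_mem_drop (List.mem_of_mem_take hd)) (CSub.refl d)) hsub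
    have := csub_holeLabels_sublist hds
    rwa [hs] at this
  refine ⟨l, cs.map (vmerge · b), i, j, hsub', by rw [hseg]; simpa using hne, ?_⟩
  rw [hseg]
  rcases hor with rfl | hsp
  · have hrank : (((cs.drop i).take j).map rank).sum ≤ 1 := by
      rw [rank_node] at hc
      exact hc
    rcases Nat.lt_or_ge ((((cs.drop i).take j).map rank).sum) 1 with h0 | h1
    · have hz : ∀ x ∈ (cs.drop i).take j, rank x = 0 := by
        intro x hx
        have hz0 : (((cs.drop i).take j).map rank).sum = 0 := by omega
        rw [List.sum_eq_zero_iff] at hz0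
        exact hz0 _ (List.mem_map_of_mem (f := rank) hx)
      rw [map_vmerge_id b hz]
      exact Or.inl rfl
    · have hone : (((cs.drop i).take j).map rank).sum = 1 := le_antisymm hrank h1
      obtain ⟨pre, d, post, hsplit, hd, hpre, hpost⟩ := sum_one_split _ hone
      have hdl : d.holeLabels = [b.rootLabel] := by
        refine (hmem d (by rw [hsplit]; simp)).eq_of_length ?_
        rw [← rank_eq_length_holeLabels, hd]
        rfl
      rw [hsplit, map_vmerge_split b pre post d hpre hpost]
      exact Or.inr ⟨l, pre, post, d.vmerge b, d, rfl, rfl,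
        punch_vmerge_self b d hdl⟩
  · obtain ⟨l₀, pre, post, e, e', heq, hceq, hp⟩ := hsp
    injection heq with hll hseg2
    subst hll
    have hcr : (pre.map rank).sum + e'.rank + (post.map rank).sum ≤ 1 := by
      rw [hceq, rank_node, List.map_append, List.sum_append, List.map_cons, List.sum_cons] at hc
      omega
    have hpos := punch_rank_pos hp
    have hpre : ∀ x ∈ pre, rank x = 0 := by
      intro x hx
      have hz : (pre.map rank).sum = 0 := by omega
      rw [List.sum_eq_zero_iff] at hz
      exact hz _ (List.mem_map_of_mem (f := rank) hx)
    have hpost : ∀ x ∈ post, rank x = 0 := by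
      intro x hx
      have hz : (post.map rank).sum = 0 := by omega
      rw [List.sum_eq_zero_iff] at hz
      exact hz _ (List.mem_map_of_mem (f := rank) hx)
    have he' : e'.rank = 1 := by omega
    have hesub : e.holeLabels.Sublist [b.rootLabel] := hmem e (by rw [hseg2]; simp)
    have herle : e.rank ≤ 1 := by
      rw [rank_eq_length_holeLabels]
      simpa using hesub.length_le
    rcases Nat.lt_or_ge e.rank 1 with h0 | h1
    · have hz : ∀ x ∈ (cs.drop i).take j, rank x = 0 := by
        intro x hx
        rw [hseg2] at hx
        rcases List.mem_append.mp hx with hx | hx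
        · exact hpre x hx
        · rcases List.mem_cons.mp hx with rfl | hx
          · omega
          · exact hpost x hx
      rw [map_vmerge_id b hz]
      exact Or.inr ⟨l, pre, post, e, e', by rw [hseg2], hceq, hp⟩
    · have her : e.rank = 1 := by omega
      have hel : e.holeLabels = [b.rootLabel] := by
        refine hesub.eq_of_length ?_
        rw [← rank_eq_length_holeLabels, her]
        rfl
      rw [hseg2, map_vmerge_split b pre post e hpre hpost]
      exact Or.inr ⟨l, pre, post, e.vmerge b, e', rfl, hceq, punch_vmerge b hp hel he'⟩

end CTree

section Eval
open CTree
variable {L : Type} [DecidableEq L]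

theorem eval_vmerge_eq {T₁ T₂ : TopTree L} {c : CTree L}
    (h : (TopTree.vmerge T₁ T₂).eval = some c) :
    ∃ c₁ c₂, T₁.eval = some c₁ ∧ T₂.eval = some c₂ ∧ c₁.rank = 1 ∧
      c₁.holeLabels = [c₂.rootLabel] ∧ c = c₁.vmerge c₂ := by
  rw [TopTree.eval] at h
  split at h
  · next c₁ c₂ h₁ h₂ =>
    split at h
    · next hcond =>
      exact ⟨c₁, c₂, h₁, h₂, hcond.1, hcond.2, (Option.some_injective _ h).symm⟩
    · exact absurd h (by simp)
  · exact absurd h (by simp)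

theorem eval_hmerge_eq {T₁ T₂ : TopTree L} {c : CTree L}
    (h : (TopTree.hmerge T₁ T₂).eval = some c) :
    ∃ a cs ds, T₁.eval = some (node a cs) ∧ T₂.eval = some (node a ds) ∧
      (node a cs : CTree L).rank + (node a ds : CTree L).rank ≤ 1 ∧
      c = node a (cs ++ ds) := by
  rw [TopTree.eval] at h
  split at h
  · next a cs b ds h₁ h₂ =>
    split at h
    · next hcond =>
      obtain ⟨rfl, hrk⟩ := hcond
      exact ⟨a, cs, ds, h₁, h₂, hrk, (Option.some_injective _ h).symm⟩
    · exact absurd h (by simp)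
  · exact absurd h (by simp)

theorem eval_shape (T : TopTree L) (c : CTree L) (h : T.eval = some c) :
    ∃ l cs, c = node l cs ∧ cs ≠ [] ∧ c.rank ≤ 1 := by
  induction T generalizing c with
  | leaf a b i =>
    rw [TopTree.eval] at h
    have hc := (Option.some_injective _ h).symm
    subst hc
    refine ⟨a, _, rfl, by simp, ?_⟩
    cases i <;> simp [rank_node]
  | vmerge T₁ T₂ ih₁ ih₂ =>
    obtain ⟨c₁, c₂, h₁, h₂, hr, hl, rfl⟩ := eval_vmerge_eq h
    obtain ⟨l₁, cs₁, rfl, hne₁, -⟩ := ih₁ _ h₁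
    obtain ⟨l₂, cs₂, -, -, hr₂⟩ := ih₂ _ h₂
    refine ⟨l₁, cs₁.map (vmerge · c₂), by rw [vmerge_node], by simpa using hne₁, ?_⟩
    rw [rank_vmerge, hr, one_mul]
    exact hr₂
  | hmerge T₁ T₂ ih₁ ih₂ =>
    obtain ⟨a, cs, ds, h₁, h₂, hrk, rfl⟩ := eval_hmerge_eq h
    obtain ⟨l₁, cs₁, he₁, hne₁, -⟩ := ih₁ _ h₁
    refine ⟨a, cs ++ ds, rfl, ?_, ?_⟩
    · injection he₁ with h3 h4
      subst h4
      simp [hne₁]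
    · rw [rank_node, List.map_append, List.sum_append]
      rw [rank_node] at hrk
      rw [rank_node] at hrk
      exact hrk

end Eval

/-- `TSub S T`: `S` is a subtree of the top tree `T`. -/
inductive TSub {L : Type} : TopTree L → TopTree L → Prop
  | refl (T : TopTree L) : TSub T T
  | vleft {S T₁ T₂} : TSub S T₁ → TSub S (.vmerge T₁ T₂)
  | vright {S T₁ T₂} : TSub S T₂ → TSub S (.vmerge T₁ T₂)
  | hleft {S T₁ T₂} : TSub S T₁ → TSub S (.hmerge T₁ T₂)
  | hright {S T₁ T₂} : TSub S T₂ → TSub S (.hmerge T₁ T₂)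

/-- Every subtree of a top tree `T` for a tree `t` evaluates to (an isomorphic
copy of) a subcluster of `t`. -/
theorem stmt11 {L : Type} [DecidableEq L] (T : TopTree L) (t : CTree L)
    (ht : T.eval = some t) (S : TopTree L) (hS : TSub S T) :
    ∃ c : CTree L, S.eval = some c ∧ IsSubcluster c t := by
  induction hS generalizing t with
  | refl =>
    obtain ⟨l, cs, rfl, hne, -⟩ := eval_shape S t ht
    exact ⟨_, ht, CTree.subcluster_self hne⟩
  | vleft h ih =>
    obtain ⟨c₁, c₂, h₁, h₂, hr, hl, rfl⟩ := eval_vmerge_eq ht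
    obtain ⟨c, hc, hsubc⟩ := ih _ h₁
    obtain ⟨-, -, -, -, hcr⟩ := eval_shape _ c hc
    exact ⟨c, hc, CTree.subcluster_vmerge_left hcr hsubc hl⟩
  | vright h ih =>
    obtain ⟨c₁, c₂, h₁, h₂, hr, hl, rfl⟩ := eval_vmerge_eq ht
    obtain ⟨c, hc, hsubc⟩ := ih _ h₂
    exact ⟨c, hc, CTree.subcluster_csub hsubc (CTree.csub_vmerge_right c₂ c₁ (by omega))⟩
  | hleft h ih =>
    obtain ⟨a, cs, ds, h₁, h₂, hrk, rfl⟩ := eval_hmerge_eq ht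
    obtain ⟨c, hc, hsubc⟩ := ih _ h₁
    exact ⟨c, hc, CTree.subcluster_append_left hsubc⟩
  | hright h ih =>
    obtain ⟨a, cs, ds, h₁, h₂, hrk, rfl⟩ := eval_hmerge_eq ht
    obtain ⟨c, hc, hsubc⟩ := ih _ h₂
    exact ⟨c, hc, CTree.subcluster_append_right hsubc⟩
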